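/- arXiv:0806.2014 — 2 statements merged into one kernel-verified Lean document; each statement's English description precedes it below -/
import Mathlib

section
/- Let d ≥ 1 and let N = (n_1,…,n_d) be a d-tuple of positive integers, at least one of which is ≥ 2. Then log(∏_{Λ_K ≠ 0} Λ_K) = V(N) · 𝓘_d(0) + 𝓗_N(0), where the product runs over the nonzero eigenvalues Λ_K, 𝓘_d(0) = −∫_0^∞ (e^{−2dt} I_0(2t)^d − e^{−t}) dt/t, and 𝓗_N(0) = −∫_0^∞ (θ_N(t) − V(N) e^{−2dt} I_0(2t)^d − 1 + e^{−t}) dt/t; both integrals converge absolutely. -/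
open MeasureTheory Real Filter

/-- The modified `I`-Bessel function of integer order `x`, via its integral
representation `I_x(t) = (1/π) ∫_0^π e^{t cos θ} cos(xθ) dθ`. -/
noncomputable def besselI (x : ℤ) (t : ℝ) : ℝ :=
  (1 / Real.pi) * ∫ θ in (0:ℝ)..Real.pi, Real.exp (t * Real.cos θ) * Real.cos ((x : ℝ) * θ)

/-- Eigenvalues of the combinatorial Laplacian on the discrete torus determined by `N`. -/
noncomputable def Lam (d : ℕ) (N : Fin d → ℕ) (K : (j : Fin d) → Fin (N j)) : ℝ :=
  2 * d - ∑ j, 2 * Real.cos (2 * Real.pi * (K j : ℝ) / (N j : ℝ))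

/-- The theta function (heat trace) of the discrete torus determined by `N`. -/
noncomputable def discTheta (d : ℕ) (N : Fin d → ℕ) (t : ℝ) : ℝ :=
  ∑ K : ((j : Fin d) → Fin (N j)), Real.exp (-(Lam d N K) * t)

section Aux
open Set


lemma exp_inner {t : ℝ} (ht : 0 < t) {a b : ℝ} (hab : a ≤ b) :
    ∫ s in Set.Ioc a b, Real.exp (-(s*t)) = (Real.exp (-(a*t)) - Real.exp (-(b*t)))/t := by
  rw [← intervalIntegral.integral_of_le hab]
  rw [intervalIntegral.integral_comp_mul_right (fun u => Real.exp (-u)) ht.ne']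
  rw [intervalIntegral.integral_comp_neg (fun u => Real.exp u)]
  rw [integral_exp, smul_eq_mul]
  ring

lemma frullani_aux {a b : ℝ} (ha : 0 < a) (hab : a ≤ b) :
    IntegrableOn (fun t => (Real.exp (-(a*t)) - Real.exp (-(b*t)))/t) (Set.Ioi 0) ∧
    ∫ t in Set.Ioi 0, (Real.exp (-(a*t)) - Real.exp (-(b*t)))/t = Real.log b - Real.log a := by
  have hb : 0 < b := lt_of_lt_of_le ha hab
  set μ := volume.restrict (Set.Ioi (0:ℝ)) with hμ
  set ν := volume.restrict (Set.Ioc a b) with hν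
  have hFc : Continuous (Function.uncurry fun t s : ℝ => Real.exp (-(s * t))) := by
    apply Continuous.rexp; continuity
  have hF : Integrable (Function.uncurry fun t s : ℝ => Real.exp (-(s * t))) (μ.prod ν) := by
    rw [integrable_prod_iff hFc.aestronglyMeasurable]
    constructor
    · refine Filter.Eventually.of_forall fun t => ?_
      exact (Continuous.integrableOn_Ioc (by continuity))
    · apply Integrable.mono' (((exp_neg_integrableOn_Ioi 0 ha).const_mul (b - a)))
      · exact hFc.norm.aestronglyMeasurable.integral_prod_right'
      · filter_upwards [ae_restrict_mem measurableSet_Ioi] with t ht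
        have hbd : ‖∫ s in Set.Ioc a b, ‖Real.exp (-(s*t))‖‖ ≤ Real.exp (-(a*t)) * (volume (Set.Ioc a b)).toReal := by
          apply norm_setIntegral_le_of_norm_le_const
          · rw [Real.volume_Ioc]; exact ENNReal.ofReal_lt_top
          · intro s hs
            rw [norm_norm, Real.norm_eq_abs, abs_of_pos (Real.exp_pos _)]
            apply Real.exp_le_exp.2
            have := hs.1.le
            nlinarith [le_of_lt (mem_Ioi.1 ht)]
        calc ‖∫ s, ‖Real.exp (-(s*t))‖ ∂ν‖ ≤ Real.exp (-(a*t)) * (volume (Set.Ioc a b)).toReal := hbd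
        _ ≤ (b - a) * Real.exp (-a * t) := by
            rw [Real.volume_Ioc, ENNReal.toReal_ofReal (by linarith), neg_mul]
            linarith [Real.exp_pos (-(a*t)), mul_comm (Real.exp (-(a*t))) (b-a)]
  have key : ∀ t ∈ Set.Ioi (0:ℝ), (∫ s, Real.exp (-(s*t)) ∂ν) = (Real.exp (-(a*t)) - Real.exp (-(b*t)))/t :=
    fun t ht => exp_inner (mem_Ioi.1 ht) hab
  have hInt : IntegrableOn (fun t => (Real.exp (-(a*t)) - Real.exp (-(b*t)))/t) (Set.Ioi 0) := by
    apply (hF.integral_prod_left).congr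
    filter_upwards [ae_restrict_mem measurableSet_Ioi] with t ht
    exact key t ht
  refine ⟨hInt, ?_⟩
  have swap := MeasureTheory.integral_integral_swap hF
  have lhs_eq : ∫ t, (∫ s, Real.exp (-(s*t)) ∂ν) ∂μ = ∫ t in Set.Ioi (0:ℝ), (Real.exp (-(a*t)) - Real.exp (-(b*t)))/t := by
    apply setIntegral_congr_fun measurableSet_Ioi
    exact key
  have rhs_eq : ∫ s, (∫ t, Real.exp (-(s*t)) ∂μ) ∂ν = Real.log b - Real.log a := by
    have h1 : ∀ s ∈ Set.Ioc a b, (∫ t, Real.exp (-(s*t)) ∂μ) = s⁻¹ := by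
      intro s hs
      have hspos : 0 < s := lt_of_lt_of_le ha hs.1.le
      have h2 : (∫ t in Set.Ioi (0:ℝ), Real.exp (-(s*t))) = s⁻¹ • ∫ u in Set.Ioi (s*(0:ℝ)), Real.exp (-u) :=
        integral_comp_mul_left_Ioi (fun u => Real.exp (-u)) 0 hspos
      rw [hμ]
      rw [h2, mul_zero, integral_exp_neg_Ioi, neg_zero, Real.exp_zero, smul_eq_mul, mul_one]
    rw [hν]
    rw [setIntegral_congr_fun measurableSet_Ioc h1]
    rw [← intervalIntegral.integral_of_le hab, integral_inv
      (by rw [Set.uIcc_of_le hab]; intro h; exact absurd h.1 (by linarith) : (0:ℝ) ∉ Set.uIcc a b)]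
    exact Real.log_div hb.ne' ha.ne'
  rw [← lhs_eq, swap, rhs_eq]

lemma frullani {l : ℝ} (hl : 0 < l) :
    IntegrableOn (fun t => (Real.exp (-t) - Real.exp (-(l*t)))/t) (Set.Ioi 0) ∧
    ∫ t in Set.Ioi 0, (Real.exp (-t) - Real.exp (-(l*t)))/t = Real.log l := by
  rcases le_or_gt 1 l with h | h
  · have H := frullani_aux one_pos h
    simp only [one_mul, Real.log_one, sub_zero] at H
    exact H
  · have H := frullani_aux hl h.le
    have e : (fun t => (Real.exp (-t) - Real.exp (-(l*t)))/t)
        = fun t => -((Real.exp (-(l*t)) - Real.exp (-(1*t)))/t) := by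
      funext t; rw [one_mul]; ring
    constructor
    · rw [e]; exact H.1.neg
    · rw [e, integral_neg, H.2, Real.log_one]; ring

lemma besselI_zero_def (t : ℝ) :
    besselI 0 t = (1 / Real.pi) * ∫ θ in (0:ℝ)..Real.pi, Real.exp (t * Real.cos θ) := by
  simp [besselI]

lemma besselI_zero_continuous : Continuous fun t => besselI 0 t := by
  simp only [besselI_zero_def]
  apply continuous_const.mul
  exact intervalIntegral.continuous_parametric_intervalIntegral_of_continuous'
    (by fun_prop : Continuous (Function.uncurry fun (t θ : ℝ) => Real.exp (t * Real.cos θ))) 0 Real.pi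

lemma besselI_zero_le {t : ℝ} (ht : 0 ≤ t) : besselI 0 t ≤ Real.exp t := by
  rw [besselI_zero_def]
  have h : (∫ θ in (0:ℝ)..Real.pi, Real.exp (t * Real.cos θ)) ≤ ∫ _ in (0:ℝ)..Real.pi, Real.exp t := by
    apply intervalIntegral.integral_mono_on Real.pi_pos.le
    · exact (Continuous.intervalIntegrable (by fun_prop) _ _)
    · exact intervalIntegrable_const
    · intro θ _
      apply Real.exp_le_exp.2
      nlinarith [Real.cos_le_one θ]
  calc (1 / Real.pi) * ∫ θ in (0:ℝ)..Real.pi, Real.exp (t * Real.cos θ)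
      ≤ (1 / Real.pi) * ∫ _ in (0:ℝ)..Real.pi, Real.exp t := by
        apply mul_le_mul_of_nonneg_left h (by positivity)
    _ = Real.exp t := by
        rw [intervalIntegral.integral_const, smul_eq_mul, sub_zero]
        field_simp

lemma le_besselI_zero {t : ℝ} (ht : 0 ≤ t) : Real.exp (-t) ≤ besselI 0 t := by
  rw [besselI_zero_def]
  have h : (∫ _ in (0:ℝ)..Real.pi, Real.exp (-t)) ≤ ∫ θ in (0:ℝ)..Real.pi, Real.exp (t * Real.cos θ) := by
    apply intervalIntegral.integral_mono_on Real.pi_pos.le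
    · exact intervalIntegrable_const
    · exact (Continuous.intervalIntegrable (by fun_prop) _ _)
    · intro θ _
      apply Real.exp_le_exp.2
      nlinarith [Real.neg_one_le_cos θ]
  calc Real.exp (-t) = (1 / Real.pi) * ∫ _ in (0:ℝ)..Real.pi, Real.exp (-t) := by
        rw [intervalIntegral.integral_const, smul_eq_mul, sub_zero]; field_simp
    _ ≤ _ := mul_le_mul_of_nonneg_left h (by positivity)

lemma besselI_decay {t : ℝ} (ht : 0 < t) :
    Real.exp (-(2*t)) * besselI 0 (2*t) ≤ Real.sqrt Real.pi / (2 * Real.sqrt t) := by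
  rw [besselI_zero_def]
  have step1 : Real.exp (-(2*t)) * ((1 / Real.pi) * ∫ θ in (0:ℝ)..Real.pi, Real.exp (2*t * Real.cos θ))
      = (1 / Real.pi) * ∫ θ in (0:ℝ)..Real.pi, Real.exp (2*t * (Real.cos θ - 1)) := by
    rw [← mul_assoc, mul_comm (Real.exp (-(2*t))) (1/Real.pi), mul_assoc]
    congr 1
    rw [← intervalIntegral.integral_const_mul]
    congr 1; funext θ
    rw [← Real.exp_add]; congr 1; ring
  rw [step1]
  have step2 : (∫ θ in (0:ℝ)..Real.pi, Real.exp (2*t * (Real.cos θ - 1)))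
      ≤ ∫ θ in (0:ℝ)..Real.pi, Real.exp (-(4*t/Real.pi^2) * θ^2) := by
    apply intervalIntegral.integral_mono_on Real.pi_pos.le
    · exact (Continuous.intervalIntegrable (by fun_prop) _ _)
    · exact (Continuous.intervalIntegrable (by fun_prop) _ _)
    · intro θ hθ
      apply Real.exp_le_exp.2
      have hcos : Real.cos θ ≤ 1 - 2 / Real.pi^2 * θ^2 := by
        apply Real.cos_le_one_sub_mul_cos_sq
        rw [abs_le]; constructor <;> [linarith [hθ.1, Real.pi_pos.le]; exact hθ.2]
      have h3 := mul_le_mul_of_nonneg_left (by linarith : Real.cos θ - 1 ≤ -(2/Real.pi^2*θ^2))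
        (by positivity : (0:ℝ) ≤ 2*t)
      have h4 : 2*t*(-(2/Real.pi^2*θ^2)) = -(4*t/Real.pi^2)*θ^2 := by ring
      linarith
  have step3 : (∫ θ in (0:ℝ)..Real.pi, Real.exp (-(4*t/Real.pi^2) * θ^2))
      ≤ Real.sqrt (Real.pi / (4*t/Real.pi^2)) := by
    rw [← integral_gaussian (4*t/Real.pi^2)]
    rw [intervalIntegral.integral_of_le Real.pi_pos.le]
    apply setIntegral_le_integral (integrable_exp_neg_mul_sq (by positivity))
    filter_upwards with θ using (Real.exp_pos _).le
  have step4 : (1 / Real.pi) * Real.sqrt (Real.pi / (4*t/Real.pi^2))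
      = Real.sqrt Real.pi / (2 * Real.sqrt t) := by
    have h1 : Real.pi / (4*t/Real.pi^2) = (Real.pi * Real.sqrt Real.pi / (2 * Real.sqrt t))^2 := by
      have e1 : Real.sqrt Real.pi ^ 2 = Real.pi := Real.sq_sqrt Real.pi_pos.le
      have e2 : Real.sqrt t ^ 2 = t := Real.sq_sqrt ht.le
      have h2 : Real.sqrt t ≠ 0 := by positivity
      field_simp
      rw [e1, e2]
      ring
    rw [h1, Real.sqrt_sq (by positivity)]
    field_simp
  calc (1 / Real.pi) * ∫ θ in (0:ℝ)..Real.pi, Real.exp (2*t * (Real.cos θ - 1))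
      ≤ (1 / Real.pi) * Real.sqrt (Real.pi / (4*t/Real.pi^2)) := by
        apply mul_le_mul_of_nonneg_left (step2.trans step3) (by positivity)
    _ = _ := step4

lemma P_nonneg {t : ℝ} (ht : 0 ≤ t) : 0 ≤ Real.exp (-(2*t)) * besselI 0 (2*t) :=
  mul_nonneg (Real.exp_pos _).le ((Real.exp_pos _).le.trans (le_besselI_zero (by linarith)))

lemma P_le_one {t : ℝ} (ht : 0 ≤ t) : Real.exp (-(2*t)) * besselI 0 (2*t) ≤ 1 := by
  have := besselI_zero_le (t := 2*t) (by linarith)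
  calc Real.exp (-(2*t)) * besselI 0 (2*t) ≤ Real.exp (-(2*t)) * Real.exp (2*t) :=
        mul_le_mul_of_nonneg_left this (Real.exp_pos _).le
    _ = 1 := by rw [← Real.exp_add]; simp

lemma exp_le_P {t : ℝ} (ht : 0 ≤ t) : Real.exp (-(4*t)) ≤ Real.exp (-(2*t)) * besselI 0 (2*t) := by
  have := le_besselI_zero (t := 2*t) (by linarith)
  calc Real.exp (-(4*t)) = Real.exp (-(2*t)) * Real.exp (-(2*t)) := by
        rw [← Real.exp_add]; ring_nf
    _ ≤ Real.exp (-(2*t)) * besselI 0 (2*t) := mul_le_mul_of_nonneg_left this (Real.exp_pos _).le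

lemma pow_rewrite (d : ℕ) (t : ℝ) :
    Real.exp (-(2*(d:ℝ)*t)) * (besselI 0 (2*t))^d = (Real.exp (-(2*t)) * besselI 0 (2*t))^d := by
  rw [mul_pow]
  congr 1
  rw [← Real.exp_nat_mul]
  congr 1; ring

lemma f1_integrable (d : ℕ) (hd : 1 ≤ d) :
    IntegrableOn (fun t : ℝ =>
      (Real.exp (-(2 * (d:ℝ) * t)) * (besselI 0 (2 * t)) ^ d - Real.exp (-t)) / t)
      (Set.Ioi (0:ℝ)) := by
  set f : ℝ → ℝ := fun t =>
    (Real.exp (-(2 * (d:ℝ) * t)) * (besselI 0 (2 * t)) ^ d - Real.exp (-t)) / t with hf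
  have hmeas : ∀ s ⊆ Set.Ioi (0:ℝ), MeasurableSet s → AEStronglyMeasurable f (volume.restrict s) := by
    intro s hs hsm
    apply ContinuousOn.aestronglyMeasurable _ hsm
    apply ContinuousOn.mono _ hs
    apply ContinuousOn.div
    · have hbc : Continuous fun t : ℝ => besselI 0 (2*t) :=
        besselI_zero_continuous.comp (by continuity)
      exact Continuous.continuousOn
        (((by fun_prop : Continuous fun t : ℝ => Real.exp (-(2*(d:ℝ)*t))).mul (hbc.pow d)).sub
          (by fun_prop))
    · exact continuous_id.continuousOn
    · intro t ht; exact (mem_Ioi.1 ht).ne'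
  rw [← Set.Ioc_union_Ioi_eq_Ioi (zero_le_one (α := ℝ))]
  apply IntegrableOn.union
  · -- on Ioc 0 1 : bounded by 4d+1
    apply Integrable.mono' (g := fun _ => (4*(d:ℝ)+1))
      (integrableOn_const (by rw [Real.volume_Ioc]; exact ENNReal.ofReal_ne_top))
      (hmeas _ (Set.Ioc_subset_Ioi_self) measurableSet_Ioc)
    filter_upwards [ae_restrict_mem measurableSet_Ioc] with t ht
    have ht0 : 0 < t := ht.1
    have ht1 : t ≤ 1 := ht.2
    rw [Real.norm_eq_abs, hf]
    have hnum : |Real.exp (-(2 * (d:ℝ) * t)) * (besselI 0 (2 * t)) ^ d - Real.exp (-t)|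
        ≤ (4*(d:ℝ)+1) * t := by
      rw [pow_rewrite]
      set P := Real.exp (-(2*t)) * besselI 0 (2*t) with hP
      have h1 : P ^ d ≤ 1 := pow_le_one₀ (P_nonneg ht0.le) (P_le_one ht0.le)
      have h2 : Real.exp (-(4*(d:ℝ)*t)) ≤ P ^ d := by
        have : Real.exp (-(4*(d:ℝ)*t)) = (Real.exp (-(4*t)))^d := by
          rw [← Real.exp_nat_mul]; congr 1; ring
        rw [this]
        exact pow_le_pow_left₀ (Real.exp_pos _).le (exp_le_P ht0.le) d
      have h3 : 1 - Real.exp (-(4*(d:ℝ)*t)) ≤ 4*(d:ℝ)*t := by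
        nlinarith [Real.add_one_le_exp (-(4*(d:ℝ)*t))]
      have h4 : 1 - Real.exp (-t) ≤ t := by nlinarith [Real.add_one_le_exp (-t)]
      have h5 : Real.exp (-t) ≤ 1 := Real.exp_le_one_iff.2 (by linarith)
      rw [abs_le]
      constructor <;> nlinarith [Real.exp_pos (-t), pow_nonneg (P_nonneg ht0.le) d]
    rw [abs_div, abs_of_pos ht0, div_le_iff₀ ht0]
    calc |Real.exp (-(2 * (d:ℝ) * t)) * (besselI 0 (2 * t)) ^ d - Real.exp (-t)|
        ≤ (4*(d:ℝ)+1) * t := hnum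
      _ = (4*(d:ℝ)+1) * t := rfl
  · -- on Ioi 1
    apply Integrable.mono'
      (g := fun t => Real.sqrt Real.pi / 2 * t ^ (-(3/2) : ℝ) + Real.exp (-t))
    · apply Integrable.add
      · exact (integrableOn_Ioi_rpow_of_lt (by norm_num) one_pos).const_mul _
      · have := exp_neg_integrableOn_Ioi (1:ℝ) one_pos
        apply this.congr_fun (fun x _ => by rw [neg_one_mul]) measurableSet_Ioi
    · exact hmeas _ (fun x hx => Set.mem_Ioi.2 (lt_trans one_pos hx)) measurableSet_Ioi
    · filter_upwards [ae_restrict_mem measurableSet_Ioi] with t ht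
      have ht1 : 1 < t := ht
      have ht0 : 0 < t := lt_trans one_pos ht1
      have hst : 0 < Real.sqrt t := Real.sqrt_pos.2 ht0
      rw [Real.norm_eq_abs, hf]
      have hP := besselI_decay ht0
      set P := Real.exp (-(2*t)) * besselI 0 (2*t) with hPdef
      have hP1 : P ≤ 1 := P_le_one ht0.le
      have hP0 : 0 ≤ P := P_nonneg ht0.le
      have hPd : P ^ d ≤ P := by
        calc P ^ d ≤ P ^ 1 := pow_le_pow_of_le_one hP0 hP1 hd
          _ = P := pow_one P
      have hnum : |Real.exp (-(2 * (d:ℝ) * t)) * (besselI 0 (2 * t)) ^ d - Real.exp (-t)|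
          ≤ Real.sqrt Real.pi / (2 * Real.sqrt t) + Real.exp (-t) := by
        rw [pow_rewrite]
        rw [abs_le]
        have := Real.exp_pos (-t)
        have hPdecay : P ^ d ≤ Real.sqrt Real.pi / (2 * Real.sqrt t) := le_trans hPd hP
        have h0 : 0 ≤ P ^ d := pow_nonneg hP0 d
        constructor <;> nlinarith
      rw [abs_div, abs_of_pos ht0, div_le_iff₀ ht0]
      have hrpow : t ^ (-(3/2) : ℝ) = 1 / (t * Real.sqrt t) := by
        rw [Real.rpow_neg ht0.le, one_div]
        congr 1
        rw [show (3/2 : ℝ) = 1 + 1/2 by norm_num, Real.rpow_add ht0, Real.rpow_one,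
          Real.sqrt_eq_rpow]
      rw [hrpow]
      have hexp := Real.exp_pos (-t)
      have e3 : (Real.sqrt Real.pi / 2 * (1/(t * Real.sqrt t))) * t
          = Real.sqrt Real.pi / (2*Real.sqrt t) := by
        field_simp
      have h6 : Real.exp (-t) ≤ Real.exp (-t) * t := by nlinarith
      calc |Real.exp (-(2 * (d:ℝ) * t)) * (besselI 0 (2 * t)) ^ d - Real.exp (-t)|
          ≤ Real.sqrt Real.pi / (2 * Real.sqrt t) + Real.exp (-t) := hnum
        _ ≤ (Real.sqrt Real.pi / 2 * (1/(t * Real.sqrt t)) + Real.exp (-t)) * t := by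
            rw [add_mul, e3]; linarith

lemma Lam_eq_sum (d : ℕ) (N : Fin d → ℕ) (K : (j : Fin d) → Fin (N j)) :
    Lam d N K = ∑ j, (2 - 2 * Real.cos (2 * Real.pi * (K j : ℝ) / (N j : ℝ))) := by
  rw [Lam, Finset.sum_sub_distrib, Finset.sum_const, Finset.card_univ, Fintype.card_fin]
  simp [mul_comm]

lemma Lam_nonneg (d : ℕ) (N : Fin d → ℕ) (K : (j : Fin d) → Fin (N j)) : 0 ≤ Lam d N K := by
  rw [Lam_eq_sum]
  apply Finset.sum_nonneg
  intro j _
  nlinarith [Real.cos_le_one (2 * Real.pi * (K j : ℝ) / (N j : ℝ))]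

lemma Lam_eq_zero_iff (d : ℕ) (N : Fin d → ℕ) (hN : ∀ j, 0 < N j)
    (K : (j : Fin d) → Fin (N j)) :
    Lam d N K = 0 ↔ ∀ j, (K j : ℕ) = 0 := by
  rw [Lam_eq_sum]
  rw [Finset.sum_eq_zero_iff_of_nonneg (fun j _ => by
    nlinarith [Real.cos_le_one (2 * Real.pi * (K j : ℝ) / (N j : ℝ))])]
  constructor
  · intro h j
    have hj := h j (Finset.mem_univ j)
    have hcos : Real.cos (2 * Real.pi * (K j : ℝ) / (N j : ℝ)) = 1 := by linarith
    rcases (Real.cos_eq_one_iff _).1 hcos with ⟨m, hm⟩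
    have hNj : (0:ℝ) < (N j : ℝ) := by exact_mod_cast hN j
    have hk : ((K j : ℕ) : ℝ) = (m : ℝ) * (N j : ℝ) := by
      have h2π : (2*Real.pi) ≠ 0 := by positivity
      have heq : (2*Real.pi) * (((K j : ℕ) : ℝ)) = (2*Real.pi) * ((m:ℝ) * (N j : ℝ)) := by
        have hNj : ((N j : ℕ) : ℝ) ≠ 0 := by
          exact_mod_cast (hN j).ne'
        field_simp at hm
        linear_combination -(2 * Real.pi) * hm
      exact mul_left_cancel₀ h2π heq
    have hub : ((K j : ℕ) : ℝ) < (N j : ℝ) := by exact_mod_cast (K j).is_lt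
    have hlb : (0:ℝ) ≤ ((K j : ℕ) : ℝ) := Nat.cast_nonneg _
    have hm0 : m = 0 := by
      by_contra hm0
      rcases lt_or_gt_of_ne hm0 with h1 | h1
      · have : (m:ℝ) ≤ -1 := by exact_mod_cast Int.le_of_lt_add_one (by simpa using h1)
        nlinarith
      · have : (1:ℝ) ≤ (m:ℝ) := by exact_mod_cast h1
        nlinarith
    rw [hm0] at hk
    simp at hk
    exact_mod_cast hk
  · intro h j _
    rw [h j]
    simp

end Aux

/-- The determinant of the Laplacian on the discrete torus expressed via the special values
`𝓘_d(0)` and `𝓗_N(0)`, together with the absolute convergence of both integrals. -/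
theorem log_det_at_zero (d : ℕ) (hd : 1 ≤ d) (N : Fin d → ℕ)
    (hN : ∀ j, 0 < N j) (hN2 : ∃ j, 2 ≤ N j) :
    IntegrableOn (fun t : ℝ =>
        (Real.exp (-(2 * d * t)) * (besselI 0 (2 * t)) ^ d - Real.exp (-t)) / t)
      (Set.Ioi (0:ℝ)) ∧
    IntegrableOn (fun t : ℝ =>
        (discTheta d N t - (∏ j, (N j : ℝ)) * Real.exp (-(2 * d * t)) * (besselI 0 (2 * t)) ^ d
          - 1 + Real.exp (-t)) / t) (Set.Ioi (0:ℝ)) ∧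
    Real.log (∏ K ∈ Finset.univ.filter (fun K : (j : Fin d) → Fin (N j) => Lam d N K ≠ 0),
        Lam d N K)
      = (∏ j, (N j : ℝ)) *
          (-∫ t in Set.Ioi (0:ℝ),
            (Real.exp (-(2 * d * t)) * (besselI 0 (2 * t)) ^ d - Real.exp (-t)) / t) +
        (-∫ t in Set.Ioi (0:ℝ),
          (discTheta d N t - (∏ j, (N j : ℝ)) * Real.exp (-(2 * d * t)) * (besselI 0 (2 * t)) ^ d
            - 1 + Real.exp (-t)) / t) := by
  classical
  set S : Finset ((j : Fin d) → Fin (N j)) :=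
    Finset.univ.filter (fun K : (j : Fin d) → Fin (N j) => Lam d N K ≠ 0) with hS
  set V : ℝ := ∏ j, (N j : ℝ) with hV
  set K₀ : (j : Fin d) → Fin (N j) := fun j => ⟨0, hN j⟩ with hK₀
  have hzero : Finset.univ.filter (fun K : (j : Fin d) → Fin (N j) => ¬ Lam d N K ≠ 0) = {K₀} := by
    ext K
    simp only [Finset.mem_filter, Finset.mem_univ, true_and, not_not, Finset.mem_singleton,
      Lam_eq_zero_iff d N hN]
    constructor
    · intro h
      funext j
      exact Fin.ext (h j)
    · intro h j
      rw [h]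
  have hcard : (S.card : ℝ) = V - 1 := by
    have h1 := Finset.card_filter_add_card_filter_not (s := (Finset.univ : Finset ((j : Fin d) → Fin (N j))))
      (p := fun K : (j : Fin d) → Fin (N j) => Lam d N K ≠ 0)
    rw [hzero] at h1
    simp only [Finset.card_singleton, Finset.card_univ, Fintype.card_pi, Fintype.card_fin] at h1
    have h2 : (S.card : ℝ) + 1 = ((∏ j, N j : ℕ) : ℝ) := by exact_mod_cast congrArg (Nat.cast (R := ℝ)) h1
    rw [Nat.cast_prod] at h2
    rw [hV]
    linarith
  have hLpos : ∀ K ∈ S, 0 < Lam d N K := fun K hK =>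
    lt_of_le_of_ne (Lam_nonneg d N K) (Ne.symm (Finset.mem_filter.1 hK).2)
  have htheta : ∀ t : ℝ, discTheta d N t = (∑ K ∈ S, Real.exp (-(Lam d N K * t))) + 1 := by
    intro t
    rw [discTheta, ← Finset.sum_filter_add_sum_filter_not Finset.univ
      (fun K : (j : Fin d) → Fin (N j) => Lam d N K ≠ 0), hzero]
    simp only [Finset.sum_singleton, neg_mul]
    congr 1
    rw [show Lam d N K₀ = 0 from (Lam_eq_zero_iff d N hN K₀).2 (fun j => rfl)]
    simp
  set f1 : ℝ → ℝ := fun t : ℝ =>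
    (Real.exp (-(2 * d * t)) * (besselI 0 (2 * t)) ^ d - Real.exp (-t)) / t with hf1def
  have hf1 : IntegrableOn f1 (Set.Ioi 0) := f1_integrable d hd
  set G : ℝ → ℝ := fun t => ∑ K ∈ S, (Real.exp (-t) - Real.exp (-(Lam d N K * t))) / t with hGdef
  have hGint : IntegrableOn G (Set.Ioi 0) :=
    integrable_finset_sum _ (fun K hK => (frullani (hLpos K hK)).1)
  have hGval : (∫ t in Set.Ioi (0:ℝ), G t) = ∑ K ∈ S, Real.log (Lam d N K) := by
    rw [integral_finset_sum _ (fun K hK => (frullani (hLpos K hK)).1)]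
    exact Finset.sum_congr rfl (fun K hK => (frullani (hLpos K hK)).2)
  have hf2eq : (fun t : ℝ =>
        (discTheta d N t - V * Real.exp (-(2 * d * t)) * (besselI 0 (2 * t)) ^ d
          - 1 + Real.exp (-t)) / t)
      = fun t => (-(G t)) - V * f1 t := by
    funext t
    rcases eq_or_ne t 0 with rfl | ht
    · simp [hGdef, hf1def]
    · rw [htheta t]
      have hB : G t = (((S.card : ℝ)) * Real.exp (-t) - ∑ K ∈ S, Real.exp (-(Lam d N K * t))) / t := by
        simp only [hGdef]
        rw [← Finset.sum_div, Finset.sum_sub_distrib, Finset.sum_const, nsmul_eq_mul]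
      rw [hB, hcard, hf1def]
      field_simp
      simp only [mul_comm t (Lam d N _)]
      ring
  have hf2 : IntegrableOn (fun t : ℝ =>
      (discTheta d N t - V * Real.exp (-(2 * d * t)) * (besselI 0 (2 * t)) ^ d
        - 1 + Real.exp (-t)) / t) (Set.Ioi 0) := by
    rw [hf2eq]
    exact (hGint.neg).sub (hf1.const_mul V)
  refine ⟨hf1, hf2, ?_⟩
  have hf2val : (∫ t in Set.Ioi (0:ℝ),
      (discTheta d N t - V * Real.exp (-(2 * d * t)) * (besselI 0 (2 * t)) ^ d
        - 1 + Real.exp (-t)) / t)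
      = -(∫ t in Set.Ioi (0:ℝ), G t) - V * ∫ t in Set.Ioi (0:ℝ), f1 t := by
    rw [hf2eq]
    calc (∫ t in Set.Ioi (0:ℝ), (-(G t) - V * f1 t))
        = (∫ t in Set.Ioi (0:ℝ), -(G t)) - ∫ t in Set.Ioi (0:ℝ), V * f1 t :=
          integral_sub hGint.neg (hf1.const_mul V)
      _ = -(∫ t in Set.Ioi (0:ℝ), G t) - V * ∫ t in Set.Ioi (0:ℝ), f1 t := by
          rw [integral_neg, integral_const_mul]
  rw [Real.log_prod (fun K hK => (Finset.mem_filter.1 hK).2)]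
  rw [hf2val, hGval]
  ring
end

section
/- Fix a real t > 0 and positive integers x and n₀. Then for every integer n ≥ n₀, one has 0 ≤ √(n²t) · e^{−n²t} · I_{nx}(n²t) ≤ (n₀t/(x + n₀t))^{n₀x/2} = (1 + x/(n₀t))^{−n₀x/2}. -/
open Real intervalIntegral MeasureTheory Complex

lemma cosn_cos_nonneg (n : ℕ) : ∀ k : ℤ,
    0 ≤ ∫ θ in (0:ℝ)..π, (Real.cos θ) ^ n * Real.cos ((k:ℝ) * θ) := by
  induction n with
  | zero =>
    intro k
    simp only [pow_zero, one_mul]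
    rcases eq_or_ne k 0 with rfl | hk
    · simp [Real.pi_pos.le]
    · have hkr : (k:ℝ) ≠ 0 := Int.cast_ne_zero.2 hk
      have : ∫ θ in (0:ℝ)..π, Real.cos ((k:ℝ) * θ) = 0 := by
        rw [intervalIntegral.integral_comp_mul_left Real.cos hkr]
        simp [Real.sin_int_mul_pi]
      simp [this]
  | succ n ih =>
    intro k
    have key : ∀ θ : ℝ, (Real.cos θ) ^ (n+1) * Real.cos ((k:ℝ) * θ)
        = ((Real.cos θ) ^ n * Real.cos (((k-1:ℤ):ℝ) * θ)
          + (Real.cos θ) ^ n * Real.cos (((k+1:ℤ):ℝ) * θ)) / 2 := by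
      intro θ
      have h1 : Real.cos ((k:ℝ)*θ - θ) + Real.cos ((k:ℝ)*θ + θ)
          = 2 * Real.cos ((k:ℝ)*θ) * Real.cos θ := by
        rw [Real.cos_add, Real.cos_sub]; ring
      push_cast
      rw [sub_mul, add_mul, one_mul]
      calc (Real.cos θ) ^ (n+1) * Real.cos ((k:ℝ) * θ)
          = Real.cos θ ^ n * (2 * Real.cos ((k:ℝ)*θ) * Real.cos θ) / 2 := by ring
        _ = Real.cos θ ^ n * (Real.cos ((k:ℝ)*θ - θ) + Real.cos ((k:ℝ)*θ + θ)) / 2 := by rw [← h1]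
        _ = _ := by ring
    rw [intervalIntegral.integral_congr (g := fun θ => ((Real.cos θ) ^ n * Real.cos (((k-1:ℤ):ℝ) * θ)
          + (Real.cos θ) ^ n * Real.cos (((k+1:ℤ):ℝ) * θ)) / 2) (fun θ _ => key θ)]
    have hc : ∀ c : ℝ, Continuous fun θ : ℝ => Real.cos θ ^ n * Real.cos (c * θ) := by
      intro c; fun_prop
    rw [intervalIntegral.integral_div, intervalIntegral.integral_add
      ((hc _).intervalIntegrable _ _) ((hc _).intervalIntegrable _ _)]
    have := ih (k-1); have := ih (k+1); positivity

lemma besselI_nonneg (k : ℤ) (s : ℝ) (hs : 0 ≤ s) : 0 ≤ besselI k s := by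
  unfold besselI
  apply mul_nonneg (by positivity)
  have key : ∀ θ : ℝ, Real.exp (s * Real.cos θ) * Real.cos ((k:ℝ)*θ)
      = ∑' n : ℕ, (s * Real.cos θ)^n / n.factorial * Real.cos ((k:ℝ)*θ) := by
    intro θ
    rw [tsum_mul_right]
    congr 1
    rw [Real.exp_eq_exp_ℝ, NormedSpace.exp_eq_tsum_div]
  rw [intervalIntegral.integral_of_le Real.pi_pos.le]
  rw [setIntegral_congr_fun measurableSet_Ioc (fun θ _ => key θ)]
  set F : ℕ → ℝ → ℝ := fun n θ => (s * Real.cos θ)^n / n.factorial * Real.cos ((k:ℝ)*θ) with hF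
  have hFcont : ∀ n, Continuous (F n) := by intro n; fun_prop
  have hFint : ∀ n, Integrable (F n) (volume.restrict (Set.Ioc (0:ℝ) π)) := fun n =>
    (hFcont n).integrableOn_Ioc.integrable
  have hFbound : ∀ n θ, ‖F n θ‖ ≤ s^n / n.factorial := by
    intro n θ
    rw [hF, norm_mul, norm_div]
    have h1 : ‖(s * Real.cos θ)^n‖ ≤ s^n := by
      rw [norm_pow]
      apply pow_le_pow_left₀ (norm_nonneg _)
      rw [Real.norm_eq_abs, abs_mul, _root_.abs_of_nonneg hs]
      calc s * |Real.cos θ| ≤ s * 1 := by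
            exact mul_le_mul_of_nonneg_left (Real.abs_cos_le_one θ) hs
        _ = s := mul_one s
    have h3 : ‖Real.cos ((k:ℝ)*θ)‖ ≤ 1 := by rw [Real.norm_eq_abs]; exact Real.abs_cos_le_one _
    have h2 : ‖((n.factorial : ℕ):ℝ)‖ = ((n.factorial : ℕ):ℝ) := Real.norm_natCast _
    rw [h2]
    calc ‖(s * Real.cos θ)^n‖ / ((n.factorial:ℕ):ℝ) * ‖Real.cos ((k:ℝ)*θ)‖
        ≤ s^n / ((n.factorial:ℕ):ℝ) * 1 := by
          have hfp : (0:ℝ) < ((n.factorial : ℕ):ℝ) := by positivity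
          gcongr
      _ = s^n / n.factorial := mul_one _
  have hnorm : ∀ n, ∫ θ, ‖F n θ‖ ∂(volume.restrict (Set.Ioc (0:ℝ) π)) ≤ π * (s^n / n.factorial) := by
    intro n
    calc ∫ θ, ‖F n θ‖ ∂(volume.restrict (Set.Ioc (0:ℝ) π))
        ≤ ∫ _, s^n / n.factorial ∂(volume.restrict (Set.Ioc (0:ℝ) π)) := by
          apply integral_mono ((hFint n).norm) (integrable_const _)
          exact fun θ => hFbound n θ
      _ = (volume (Set.Ioc (0:ℝ) π)).toReal * (s^n / n.factorial) := by
          rw [MeasureTheory.setIntegral_const]; simp [smul_eq_mul]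
          left; rw [max_eq_left Real.pi_pos.le, ENNReal.toReal_ofReal Real.pi_pos.le]
      _ = π * (s^n / n.factorial) := by
          rw [Real.volume_Ioc]; norm_num [Real.pi_pos.le]
  have hsum : Summable fun n => ∫ θ, ‖F n θ‖ ∂(volume.restrict (Set.Ioc (0:ℝ) π)) := by
    apply Summable.of_nonneg_of_le (fun n => integral_nonneg (fun θ => norm_nonneg _)) hnorm
    exact (Real.summable_pow_div_factorial s).mul_left π
  rw [← MeasureTheory.integral_tsum_of_summable_integral_norm hFint hsum]
  apply tsum_nonneg
  intro n
  rw [← intervalIntegral.integral_of_le Real.pi_pos.le]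
  have : ∀ θ:ℝ, F n θ = (s^n / n.factorial) * ((Real.cos θ)^n * Real.cos ((k:ℝ)*θ)) := by
    intro θ; rw [hF]; ring
  rw [intervalIntegral.integral_congr (fun θ _ => this θ), intervalIntegral.integral_const_mul]
  exact mul_nonneg (by positivity) (cosn_cos_nonneg n k)

lemma even_int (g : ℝ → ℝ) (hg : Continuous g) (heven : ∀ x, g (-x) = g x) :
    ∫ x in (-π)..π, g x = 2 * ∫ x in (0:ℝ)..π, g x := by
  have h1 : ∫ x in (0:ℝ)..π, g x = ∫ x in (-π)..(0:ℝ), g x := by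
    calc ∫ x in (0:ℝ)..π, g x = ∫ x in (0:ℝ)..π, g (-x) :=
          intervalIntegral.integral_congr (fun x _ => (heven x).symm)
      _ = ∫ x in (-π)..(-0:ℝ), g x := intervalIntegral.integral_comp_neg g
      _ = ∫ x in (-π)..(0:ℝ), g x := by norm_num
  rw [← intervalIntegral.integral_add_adjacent_intervals
    (hg.intervalIntegrable (-π) 0) (hg.intervalIntegrable 0 π), ← h1]
  ring

lemma complex_cos_add_mul_I (x y : ℝ) :
    Complex.cos (x + y * Complex.I)
      = (Real.cos x * Real.cosh y : ℝ) - (Real.sin x * Real.sinh y : ℝ) * Complex.I := by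
  rw [Complex.cos_add, Complex.cos_mul_I, Complex.sin_mul_I]
  push_cast
  ring

lemma contour_shift (k : ℤ) (s u : ℝ) :
    ∫ x in (-π)..π, Real.exp (s * Real.cos x) * Real.cos ((k:ℝ) * x)
      = ∫ x in (-π)..π,
          Real.exp (s * Real.cosh u * Real.cos x - (k:ℝ) * u)
            * Real.cos ((k:ℝ) * x - s * Real.sinh u * Real.sin x) := by
  set F : ℂ → ℂ := fun z => Complex.exp (s * Complex.cos z + k * z * Complex.I) with hFdef
  have hF : Differentiable ℂ F := by
    apply Differentiable.cexp
    exact (Complex.differentiable_cos.const_mul _).add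
      ((differentiable_id.const_mul _).mul_const _)
  have hper : ∀ y : ℝ, F ((π:ℝ) + y * Complex.I) = F (-(π:ℂ) + y * Complex.I) := by
    intro y
    have hz : ((π:ℝ) : ℂ) + y * Complex.I = ((-(π:ℂ)) + y * Complex.I) + 2 * (π:ℝ) := by
      push_cast; ring
    rw [hz, hFdef]
    simp only []
    have hcos : Complex.cos (((-(π:ℂ)) + y * Complex.I) + 2 * (π:ℝ)) =
        Complex.cos ((-(π:ℂ)) + y * Complex.I) := by
      push_cast
      exact Complex.cos_add_two_pi _
    rw [hcos]
    have hexp : (s : ℂ) * Complex.cos ((-(π:ℂ)) + y * Complex.I)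
          + k * (((-(π:ℂ)) + y * Complex.I) + 2 * (π:ℝ)) * Complex.I
        = ((s : ℂ) * Complex.cos ((-(π:ℂ)) + y * Complex.I)
          + k * ((-(π:ℂ)) + y * Complex.I) * Complex.I) + k * (2 * (π:ℝ) * Complex.I) := by
      ring
    rw [hexp, Complex.exp_add, Complex.exp_int_mul_two_pi_mul_I, mul_one]
  have hrect := Complex.integral_boundary_rect_eq_zero_of_differentiableOn F
    (((-π:ℝ) : ℂ)) ((π:ℝ) + u * Complex.I) (hF.differentiableOn)
  simp only [Complex.ofReal_re, Complex.ofReal_im, Complex.add_re, Complex.add_im,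
    Complex.mul_re, Complex.mul_im, Complex.I_re, Complex.I_im, Complex.ofReal_re,
    Complex.ofReal_im] at hrect
  norm_num at hrect
  have hvert : (∫ y in (0:ℝ)..u, F ((π:ℝ) + y * Complex.I))
      = ∫ y in (0:ℝ)..u, F (-(π:ℂ) + y * Complex.I) :=
    intervalIntegral.integral_congr (fun y _ => hper y)
  rw [hvert] at hrect
  have h5 : (∫ x in (-π)..π, F ((x:ℝ):ℂ)) = ∫ x in (-π)..π, F (((x:ℝ):ℂ) + u * Complex.I) := by
    linear_combination hrect
  have hcont1 : Continuous fun x : ℝ => F ((x:ℝ):ℂ) :=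
    hF.continuous.comp Complex.continuous_ofReal
  have hcont2 : Continuous fun x : ℝ => F (((x:ℝ):ℂ) + u * Complex.I) := by
    apply hF.continuous.comp
    fun_prop
  have hFre : ∀ x : ℝ, (F ((x:ℝ):ℂ)).re = Real.exp (s * Real.cos x) * Real.cos ((k:ℝ) * x) := by
    intro x
    rw [hFdef]
    simp only []
    rw [← Complex.ofReal_cos, Complex.exp_re]
    norm_num [Complex.add_re, Complex.add_im, Complex.mul_re, Complex.mul_im, Complex.cos_ofReal_re]
  have hFre2 : ∀ x : ℝ, (F (((x:ℝ):ℂ) + u * Complex.I)).re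
      = Real.exp (s * Real.cosh u * Real.cos x - (k:ℝ) * u)
          * Real.cos ((k:ℝ) * x - s * Real.sinh u * Real.sin x) := by
    intro x
    rw [hFdef]
    simp only []
    rw [complex_cos_add_mul_I, Complex.exp_re]
    have hre : ((s:ℂ) * ((Real.cos x * Real.cosh u : ℝ) - (Real.sin x * Real.sinh u : ℝ) * Complex.I)
        + (k:ℂ) * (((x:ℝ):ℂ) + u * Complex.I) * Complex.I).re
        = s * Real.cosh u * Real.cos x - (k:ℝ) * u := by
      simp [Complex.add_re, Complex.mul_re, Complex.mul_im, Complex.cos_ofReal_re, Complex.sin_ofReal_re, Complex.sinh_ofReal_re, Complex.cosh_ofReal_re]; ring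
    have him : ((s:ℂ) * ((Real.cos x * Real.cosh u : ℝ) - (Real.sin x * Real.sinh u : ℝ) * Complex.I)
        + (k:ℂ) * (((x:ℝ):ℂ) + u * Complex.I) * Complex.I).im
        = (k:ℝ) * x - s * Real.sinh u * Real.sin x := by
      simp [Complex.add_im, Complex.mul_re, Complex.mul_im, Complex.cos_ofReal_re, Complex.sin_ofReal_re, Complex.sinh_ofReal_re, Complex.cosh_ofReal_re]; ring
    rw [hre, him]
  calc ∫ x in (-π)..π, Real.exp (s * Real.cos x) * Real.cos ((k:ℝ) * x)
      = ∫ x in (-π)..π, (F ((x:ℝ):ℂ)).re :=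
        intervalIntegral.integral_congr (fun x _ => (hFre x).symm)
    _ = (∫ x in (-π)..π, F ((x:ℝ):ℂ)).re := by
        have := Complex.reCLM.intervalIntegral_comp_comm (μ := volume)
          (hcont1.intervalIntegrable (-π) π)
        simpa using this
    _ = (∫ x in (-π)..π, F (((x:ℝ):ℂ) + u * Complex.I)).re := by rw [h5]
    _ = ∫ x in (-π)..π, (F (((x:ℝ):ℂ) + u * Complex.I)).re := by
        have := Complex.reCLM.intervalIntegral_comp_comm (μ := volume)
          (hcont2.intervalIntegrable (-π) π)
        simpa using this.symm
    _ = _ := intervalIntegral.integral_congr (fun x _ => hFre2 x)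

lemma besselI_zero_eq (r : ℝ) :
    besselI 0 r = (1 / π) * ∫ θ in (0:ℝ)..π, Real.exp (r * Real.cos θ) := by
  unfold besselI
  norm_num

lemma besselI_le_shift (k : ℤ) (s u : ℝ) :
    besselI k s ≤ Real.exp (-((k:ℝ) * u)) * besselI 0 (s * Real.cosh u) := by
  have hg1 : Continuous fun x : ℝ => Real.exp (s * Real.cos x) * Real.cos ((k:ℝ)*x) := by fun_prop
  have hg2 : Continuous fun x : ℝ => Real.exp (s * Real.cosh u * Real.cos x) := by fun_prop
  have hgs : Continuous fun x : ℝ =>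
      Real.exp (s * Real.cosh u * Real.cos x - (k:ℝ) * u)
        * Real.cos ((k:ℝ) * x - s * Real.sinh u * Real.sin x) := by fun_prop
  have key : (∫ x in (0:ℝ)..π, Real.exp (s * Real.cos x) * Real.cos ((k:ℝ)*x))
      ≤ Real.exp (-((k:ℝ) * u)) * ∫ x in (0:ℝ)..π, Real.exp (s * Real.cosh u * Real.cos x) := by
    have h2 : 2 * ∫ x in (0:ℝ)..π, Real.exp (s * Real.cos x) * Real.cos ((k:ℝ)*x)
        = ∫ x in (-π)..π,
            Real.exp (s * Real.cosh u * Real.cos x - (k:ℝ) * u)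
              * Real.cos ((k:ℝ) * x - s * Real.sinh u * Real.sin x) := by
      rw [← contour_shift k s u, even_int _ hg1 (fun x => by simp [Real.cos_neg])]
    have h3 : (∫ x in (-π)..π,
          Real.exp (s * Real.cosh u * Real.cos x - (k:ℝ) * u)
            * Real.cos ((k:ℝ) * x - s * Real.sinh u * Real.sin x))
        ≤ ∫ x in (-π)..π, Real.exp (s * Real.cosh u * Real.cos x) * Real.exp (-((k:ℝ) * u)) := by
      apply intervalIntegral.integral_mono_on (by linarith [Real.pi_pos])
        (hgs.intervalIntegrable _ _) ((hg2.mul continuous_const).intervalIntegrable _ _)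
      intro x _
      simp only [Pi.mul_apply]
      rw [← Real.exp_add]
      calc Real.exp (s * Real.cosh u * Real.cos x - (k:ℝ) * u)
            * Real.cos ((k:ℝ) * x - s * Real.sinh u * Real.sin x)
          ≤ Real.exp (s * Real.cosh u * Real.cos x - (k:ℝ) * u) * 1 := by
            apply mul_le_mul_of_nonneg_left (Real.cos_le_one _) (Real.exp_nonneg _)
        _ = Real.exp (s * Real.cosh u * Real.cos x + -((k:ℝ) * u)) := by
            rw [mul_one]; ring_nf
    have h4 : (∫ x in (-π)..π, Real.exp (s * Real.cosh u * Real.cos x) * Real.exp (-((k:ℝ) * u)))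
        = Real.exp (-((k:ℝ) * u)) * (2 * ∫ x in (0:ℝ)..π, Real.exp (s * Real.cosh u * Real.cos x)) := by
      rw [intervalIntegral.integral_mul_const, even_int _ hg2 (fun x => by simp [Real.cos_neg])]
      ring
    linarith [h2, h3, h4]
  rw [besselI_zero_eq]
  unfold besselI
  have hπ : (0:ℝ) < 1 / π := by positivity
  calc (1/π) * ∫ x in (0:ℝ)..π, Real.exp (s * Real.cos x) * Real.cos ((k:ℝ)*x)
      ≤ (1/π) * (Real.exp (-((k:ℝ) * u)) * ∫ x in (0:ℝ)..π, Real.exp (s * Real.cosh u * Real.cos x)) :=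
        mul_le_mul_of_nonneg_left key hπ.le
    _ = Real.exp (-((k:ℝ) * u)) * ((1/π) * ∫ x in (0:ℝ)..π, Real.exp (s * Real.cosh u * Real.cos x)) := by
        ring

lemma besselI_zero_le_s9 (r : ℝ) (hr : 0 < r) : besselI 0 r ≤ Real.exp r / Real.sqrt r := by
  rw [besselI_zero_eq]
  have hb : (0:ℝ) < 2*r/π^2 := by positivity
  have hpt : ∀ θ ∈ Set.Icc (0:ℝ) π,
      Real.exp (r * Real.cos θ) ≤ Real.exp r * Real.exp (-(2*r/π^2) * θ^2) := by
    intro θ hθ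
    rw [← Real.exp_add]
    apply Real.exp_le_exp.2
    have h1 : 2/π * (θ/2) ≤ Real.sin (θ/2) :=
      Real.mul_le_sin (by linarith [hθ.1]) (by linarith [hθ.2])
    have h2 : Real.cos θ = 1 - 2 * Real.sin (θ/2)^2 := by
      have := Real.cos_two_mul' (θ/2)
      have hss := Real.sin_sq_add_cos_sq (θ/2)
      have hθ2 : 2 * (θ/2) = θ := by ring
      rw [hθ2] at this
      nlinarith [this, hss]
    have hπ := Real.pi_pos
    have h3 : (0:ℝ) ≤ θ/2 := by linarith [hθ.1]
    have hcos : Real.cos θ ≤ 1 - 2*θ^2/π^2 := by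
      rw [h2]
      have : (θ/π)^2 ≤ Real.sin (θ/2)^2 := by
        apply sq_le_sq'
        · nlinarith [Real.sin_nonneg_of_nonneg_of_le_pi (x := θ/2) h3 (by linarith [hθ.2]),
            div_nonneg hθ.1 hπ.le]
        · calc θ/π = 2/π * (θ/2) := by ring
            _ ≤ Real.sin (θ/2) := h1
      have hπ2 : 2*θ^2/π^2 = 2*((θ/π)^2) := by ring
      linarith [this, hπ2]
    have := mul_le_mul_of_nonneg_left hcos hr.le
    calc r * Real.cos θ ≤ r * (1 - 2*θ^2/π^2) := this
      _ = r + -(2*r/π^2) * θ^2 := by ring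
  have hcont1 : Continuous fun θ : ℝ => Real.exp (r * Real.cos θ) := by fun_prop
  have hcont2 : Continuous fun θ : ℝ => Real.exp r * Real.exp (-(2*r/π^2) * θ^2) := by fun_prop
  have hgauss : IntegrableOn (fun θ : ℝ => Real.exp (-(2*r/π^2) * θ^2)) (Set.Ioi 0) := by
    exact (integrable_exp_neg_mul_sq hb).integrableOn
  calc (1/π) * ∫ θ in (0:ℝ)..π, Real.exp (r * Real.cos θ)
      ≤ (1/π) * ∫ θ in (0:ℝ)..π, Real.exp r * Real.exp (-(2*r/π^2) * θ^2) := by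
        apply mul_le_mul_of_nonneg_left ?_ (by positivity)
        exact intervalIntegral.integral_mono_on Real.pi_pos.le
          (hcont1.intervalIntegrable _ _) (hcont2.intervalIntegrable _ _) hpt
    _ = (1/π) * Real.exp r * ∫ θ in (0:ℝ)..π, Real.exp (-(2*r/π^2) * θ^2) := by
        rw [intervalIntegral.integral_const_mul]; ring
    _ ≤ (1/π) * Real.exp r * ∫ θ in Set.Ioi (0:ℝ), Real.exp (-(2*r/π^2) * θ^2) := by
        apply mul_le_mul_of_nonneg_left ?_ (by positivity)
        rw [intervalIntegral.integral_of_le Real.pi_pos.le]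
        apply setIntegral_mono_set hgauss
        · filter_upwards with θ using Real.exp_nonneg _
        · exact HasSubset.Subset.eventuallyLE Set.Ioc_subset_Ioi_self
    _ = (1/π) * Real.exp r * (Real.sqrt (π/(2*r/π^2))/2) := by rw [integral_gaussian_Ioi]
    _ ≤ Real.exp r / Real.sqrt r := by
        have hπ := Real.pi_pos
        have hsr : (0:ℝ) < Real.sqrt r := Real.sqrt_pos.2 hr
        have h6 : π/(2*r/π^2) ≤ (2*π/Real.sqrt r)^2 := by
          have hexp : (2*π/Real.sqrt r)^2 = 4*π^2/r := by
            rw [div_pow, Real.sq_sqrt hr.le]; ring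
          rw [hexp, div_le_div_iff₀ (by positivity) hr]
          have hπ0 : π ≠ 0 := Real.pi_pos.ne'
          have h8 : 4*π^2*(2*r/π^2) = 8*r := by field_simp; ring
          rw [h8]
          nlinarith [Real.pi_le_four, hr]
        have h7 : Real.sqrt (π/(2*r/π^2)) ≤ 2*π/Real.sqrt r := by
          calc Real.sqrt (π/(2*r/π^2)) ≤ Real.sqrt ((2*π/Real.sqrt r)^2) := Real.sqrt_le_sqrt h6
            _ = 2*π/Real.sqrt r := Real.sqrt_sq (by positivity)
        calc (1/π) * Real.exp r * (Real.sqrt (π/(2*r/π^2))/2)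
            ≤ (1/π) * Real.exp r * ((2*π/Real.sqrt r)/2) := by
              apply mul_le_mul_of_nonneg_left (by linarith) (by positivity)
          _ = Real.exp r / Real.sqrt r := by field_simp

lemma log_ge_div {y : ℝ} (hy : 0 ≤ y) : y/(1+y) ≤ Real.log (1+y) := by
  have h := Real.log_le_sub_one_of_pos (x := (1+y)⁻¹) (by positivity)
  rw [Real.log_inv] at h
  have h2 : 1 - (1+y)⁻¹ = y/(1+y) := by
    field_simp
    ring
  linarith

lemma exp_ineq (u : ℝ) (hu : 0 ≤ u) :
    Real.cosh u - 1 - u * Real.sinh u + Real.sinh u / 2 * Real.log (1 + Real.sinh u) ≤ 0 := by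
  set H : ℝ → ℝ := fun v => Real.cosh v - 1 - v * Real.sinh v
      + Real.sinh v / 2 * Real.log (1 + Real.sinh v) with hH
  have hpos : ∀ v : ℝ, 0 ≤ v → (0:ℝ) < 1 + Real.sinh v := by
    intro v hv
    have := Real.sinh_nonneg_iff.2 hv
    linarith
  have hcont : ContinuousOn H (Set.Ici 0) := by
    apply ContinuousOn.add
    · fun_prop
    · apply ContinuousOn.mul (by fun_prop)
      apply ContinuousOn.log (by fun_prop)
      intro v hv
      exact (hpos v hv).ne'
  have hderiv : ∀ v ∈ interior (Set.Ici (0:ℝ)), deriv H v ≤ 0 := by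
    intro v hv
    rw [interior_Ici] at hv
    have hv0 : (0:ℝ) < v := hv
    have hne : 1 + Real.sinh v ≠ 0 := (hpos v hv0.le).ne'
    have hd : HasDerivAt H
        (Real.sinh v - (1 * Real.sinh v + v * Real.cosh v)
          + (Real.cosh v / 2 * Real.log (1 + Real.sinh v)
             + Real.sinh v / 2 * ((0 + Real.cosh v) / (1 + Real.sinh v)))) v := by
      apply HasDerivAt.add
      · exact ((Real.hasDerivAt_cosh v).sub_const 1).sub
          ((hasDerivAt_id v).mul (Real.hasDerivAt_sinh v))
      · exact ((Real.hasDerivAt_sinh v).div_const 2).mul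
          (((hasDerivAt_const v (1:ℝ)).add (Real.hasDerivAt_sinh v)).log hne)
    rw [hd.deriv]
    have hsinh : 0 < Real.sinh v := Real.sinh_pos_iff.2 hv0
    have hcosh : 0 < Real.cosh v := Real.cosh_pos v
    have hlog1 : Real.log (1 + Real.sinh v) ≤ v := by
      rw [Real.log_le_iff_le_exp (hpos v hv0.le)]
      have := Real.sinh_add_cosh v
      have := Real.one_le_cosh v
      linarith
    have hlog2 : Real.sinh v/(1+Real.sinh v) ≤ Real.log (1 + Real.sinh v) := log_ge_div hsinh.le
    have hbr : Real.log (1+Real.sinh v)/2 + (Real.sinh v/(1+Real.sinh v))/2 - v ≤ 0 := by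
      linarith
    have hE : Real.sinh v - (1 * Real.sinh v + v * Real.cosh v)
          + (Real.cosh v / 2 * Real.log (1 + Real.sinh v)
             + Real.sinh v / 2 * ((0 + Real.cosh v) / (1 + Real.sinh v)))
        = Real.cosh v * (Real.log (1+Real.sinh v)/2 + (Real.sinh v/(1+Real.sinh v))/2 - v) := by
      ring
    rw [hE]
    exact mul_nonpos_of_nonneg_of_nonpos hcosh.le hbr
  have hanti : AntitoneOn H (Set.Ici 0) :=
    antitoneOn_of_deriv_nonpos (convex_Ici 0) hcont (fun v hv => by
      apply DifferentiableAt.differentiableWithinAt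
      rw [interior_Ici] at hv
      have hne : 1 + Real.sinh v ≠ 0 := (hpos v hv.le).ne'
      have hd : HasDerivAt H
          (Real.sinh v - (1 * Real.sinh v + v * Real.cosh v)
            + (Real.cosh v / 2 * Real.log (1 + Real.sinh v)
               + Real.sinh v / 2 * ((0 + Real.cosh v) / (1 + Real.sinh v)))) v := by
        apply HasDerivAt.add
        · exact ((Real.hasDerivAt_cosh v).sub_const 1).sub
            ((hasDerivAt_id v).mul (Real.hasDerivAt_sinh v))
        · exact ((Real.hasDerivAt_sinh v).div_const 2).mul
            (((hasDerivAt_const v (1:ℝ)).add (Real.hasDerivAt_sinh v)).log hne)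
      exact hd.differentiableAt) hderiv
  have h0 : H 0 = 0 := by
    rw [hH]
    simp
  have := hanti (Set.self_mem_Ici) (Set.mem_Ici.2 hu) hu
  rw [h0] at this
  exact this

lemma nlog_mono (c : ℝ) (hc : 0 < c) {m M : ℝ} (hm : 0 < m) (hmM : m ≤ M) :
    m * Real.log (1 + c/m) ≤ M * Real.log (1 + c/M) := by
  set ψ : ℝ → ℝ := fun y => y * Real.log (1 + c/y) with hψ
  have hpos : ∀ y : ℝ, 0 < y → (0:ℝ) < 1 + c/y := by
    intro y hy; positivity
  have hd : ∀ y : ℝ, 0 < y → HasDerivAt ψ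
      (1 * Real.log (1 + c/y) + y * ((0 + c * -(y^2)⁻¹) / (1 + c/y))) y := by
    intro y hy
    apply (hasDerivAt_id y).mul
    apply HasDerivAt.log
    · exact (hasDerivAt_const y (1:ℝ)).add ((hasDerivAt_inv hy.ne').const_mul c)
    · exact (hpos y hy).ne'
  have hderiv : ∀ y ∈ interior (Set.Ici m), 0 ≤ deriv ψ y := by
    intro y hy
    rw [interior_Ici] at hy
    have hy0 : 0 < y := lt_of_le_of_lt hm.le hy
    rw [(hd y hy0).deriv]
    have hlog : c/(y+c) ≤ Real.log (1 + c/y) := by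
      have h1 := log_ge_div (y := c/y) (by positivity)
      have hy0' : y ≠ 0 := hy0.ne'
      have hyc : y + c ≠ 0 := by positivity
      have hne2 : 1 + c/y ≠ 0 := (hpos y hy0).ne'
      have h2 : (c/y)/(1+c/y) = c/(y+c) := by
        field_simp
      rwa [h2] at h1
    have hE : 1 * Real.log (1 + c/y) + y * ((0 + c * -(y^2)⁻¹) / (1 + c/y))
        = Real.log (1 + c/y) - c/(y+c) := by
      have hyc : y + c ≠ 0 := by positivity
      field_simp
      ring
    rw [hE]
    linarith
  have hmono : MonotoneOn ψ (Set.Ici m) := by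
    apply monotoneOn_of_deriv_nonneg (convex_Ici m) ?_ ?_ hderiv
    · apply ContinuousOn.mul continuousOn_id
      apply ContinuousOn.log
      · apply ContinuousOn.add continuousOn_const
        apply ContinuousOn.div continuousOn_const continuousOn_id
        intro y hy; exact (lt_of_lt_of_le hm hy).ne'
      · intro y hy; exact (hpos y (lt_of_lt_of_le hm hy)).ne'
    · intro y hy
      rw [interior_Ici] at hy
      exact ((hd y (hm.trans hy)).differentiableAt).differentiableWithinAt
  exact hmono Set.self_mem_Ici (Set.mem_Ici.2 hmM) hmM

/-- Uniform bound for re-scaled Bessel functions: for `t > 0`, positive integers `x`, `n₀`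
and any `n ≥ n₀`,
`0 ≤ √(n²t)·e^{-n²t}·I_{nx}(n²t) ≤ (n₀t/(x+n₀t))^{n₀x/2} = (1 + x/(n₀t))^{-n₀x/2}`. -/
theorem rescaled_besselI_uniform_bound (t : ℝ) (ht : 0 < t) (x n₀ : ℕ)
    (hx : 0 < x) (hn₀ : 0 < n₀) (n : ℕ) (hn : n₀ ≤ n) :
    (0 ≤ Real.sqrt ((n : ℝ) ^ 2 * t) * Real.exp (-((n : ℝ) ^ 2 * t)) *
        besselI ((n : ℤ) * (x : ℤ)) ((n : ℝ) ^ 2 * t)) ∧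
    (Real.sqrt ((n : ℝ) ^ 2 * t) * Real.exp (-((n : ℝ) ^ 2 * t)) *
        besselI ((n : ℤ) * (x : ℤ)) ((n : ℝ) ^ 2 * t)
      ≤ ((n₀ : ℝ) * t / ((x : ℝ) + (n₀ : ℝ) * t)) ^ ((n₀ : ℝ) * (x : ℝ) / 2)) ∧
    ((n₀ : ℝ) * t / ((x : ℝ) + (n₀ : ℝ) * t)) ^ ((n₀ : ℝ) * (x : ℝ) / 2)
      = (1 + (x : ℝ) / ((n₀ : ℝ) * t)) ^ (-((n₀ : ℝ) * (x : ℝ)) / 2) := by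
  have hn' : 0 < n := lt_of_lt_of_le hn₀ hn
  have hnR : (0:ℝ) < (n:ℝ) := by exact_mod_cast hn'
  have hxR : (0:ℝ) < (x:ℝ) := by exact_mod_cast hx
  have hn₀R : (0:ℝ) < (n₀:ℝ) := by exact_mod_cast hn₀
  have hnn₀ : (n₀:ℝ) ≤ (n:ℝ) := by exact_mod_cast hn
  set s : ℝ := (n:ℝ)^2 * t with hs
  have hspos : 0 < s := by positivity
  set kr : ℝ := (n:ℝ) * (x:ℝ) with hkr
  have hkrpos : 0 < kr := by positivity
  set a : ℝ := kr / s with ha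
  have hapos : 0 < a := by positivity
  set u : ℝ := Real.arsinh a with hu
  have hu0 : 0 ≤ u := Real.arsinh_nonneg_iff.2 hapos.le
  have hsinh : Real.sinh u = a := Real.sinh_arsinh a
  have hcosh1 : 1 ≤ Real.cosh u := Real.one_le_cosh u
  have hB0 : 0 ≤ besselI ((n:ℤ) * (x:ℤ)) s := besselI_nonneg _ s hspos.le
  refine ⟨by positivity, ?_, ?_⟩
  · -- main bound
    have hcast : (((n:ℤ) * (x:ℤ) : ℤ) : ℝ) = kr := by push_cast; rfl
    have step1 : besselI ((n:ℤ) * (x:ℤ)) s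
        ≤ Real.exp (-(kr * u)) * besselI 0 (s * Real.cosh u) := by
      have := besselI_le_shift ((n:ℤ) * (x:ℤ)) s u
      rwa [hcast] at this
    have hr : 0 < s * Real.cosh u := by
      have := Real.cosh_pos u; positivity
    have step2 : besselI 0 (s * Real.cosh u)
        ≤ Real.exp (s * Real.cosh u) / Real.sqrt (s * Real.cosh u) :=
      besselI_zero_le_s9 _ hr
    have hsqrt : Real.sqrt s ≤ Real.sqrt (s * Real.cosh u) := by
      apply Real.sqrt_le_sqrt
      nlinarith [hspos, hcosh1]
    have step3 : Real.sqrt s * Real.exp (-s) * besselI ((n:ℤ) * (x:ℤ)) s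
        ≤ Real.exp (s * Real.cosh u - s - kr * u) := by
      have h1 : Real.sqrt s * Real.exp (-s) * besselI ((n:ℤ) * (x:ℤ)) s
          ≤ Real.sqrt s * Real.exp (-s) *
            (Real.exp (-(kr * u)) * (Real.exp (s * Real.cosh u) / Real.sqrt (s * Real.cosh u))) := by
        apply mul_le_mul_of_nonneg_left (step1.trans ?_) (by positivity)
        exact mul_le_mul_of_nonneg_left step2 (Real.exp_nonneg _)
      refine h1.trans ?_
      have hsc : 0 < Real.sqrt (s * Real.cosh u) := Real.sqrt_pos.2 hr
      have h2 : Real.sqrt s * (Real.sqrt (s * Real.cosh u))⁻¹ ≤ 1 := by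
        rw [mul_inv_le_iff₀ hsc, one_mul]
        exact hsqrt
      have hexps : Real.exp (-s) * Real.exp (-(kr*u)) * Real.exp (s * Real.cosh u)
          = Real.exp (s * Real.cosh u - s - kr * u) := by
        rw [← Real.exp_add, ← Real.exp_add]
        congr 1
        ring
      have lhs_eq : Real.sqrt s * Real.exp (-s) *
            (Real.exp (-(kr * u)) * (Real.exp (s * Real.cosh u) / Real.sqrt (s * Real.cosh u)))
          = (Real.sqrt s * (Real.sqrt (s * Real.cosh u))⁻¹) *
              (Real.exp (-s) * Real.exp (-(kr*u)) * Real.exp (s * Real.cosh u)) := by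
        rw [div_eq_mul_inv]
        ring
      rw [lhs_eq, hexps]
      calc (Real.sqrt s * (Real.sqrt (s * Real.cosh u))⁻¹) * Real.exp (s * Real.cosh u - s - kr * u)
          ≤ 1 * Real.exp (s * Real.cosh u - s - kr * u) :=
            mul_le_mul_of_nonneg_right h2 (Real.exp_nonneg _)
        _ = Real.exp (s * Real.cosh u - s - kr * u) := one_mul _
    -- exponent bound
    have step4 : s * Real.cosh u - s - kr * u ≤ -(kr/2) * Real.log (1 + kr/s) := by
      have hH := exp_ineq u hu0
      rw [hsinh] at hH
      have hmul := mul_le_mul_of_nonneg_left hH hspos.le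
      rw [mul_zero] at hmul
      have hsa : s * a = kr := by
        rw [ha]
        field_simp
      nlinarith [hmul, hsa]
    have step5 : -(kr/2) * Real.log (1 + kr/s)
        ≤ -((x:ℝ)/(2*t)) * (((n₀:ℝ)*t) * Real.log (1 + (x:ℝ)/((n₀:ℝ)*t))) := by
      have hmono := nlog_mono (x:ℝ) hxR (m := (n₀:ℝ)*t) (M := (n:ℝ)*t)
        (by positivity) (by nlinarith)
      have hid1 : kr/s = (x:ℝ)/((n:ℝ)*t) := by
        rw [hkr, hs]
        field_simp
      have hid2 : -(kr/2) * Real.log (1 + kr/s)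
          = -((x:ℝ)/(2*t)) * (((n:ℝ)*t) * Real.log (1 + (x:ℝ)/((n:ℝ)*t))) := by
        rw [hid1, hkr]
        field_simp
      rw [hid2]
      have hc : (0:ℝ) ≤ (x:ℝ)/(2*t) := by positivity
      have hmm := mul_le_mul_of_nonneg_left hmono hc
      linarith [hmm]
    have step6 : Real.exp (-((x:ℝ)/(2*t)) * (((n₀:ℝ)*t) * Real.log (1 + (x:ℝ)/((n₀:ℝ)*t))))
        = ((n₀ : ℝ) * t / ((x : ℝ) + (n₀ : ℝ) * t)) ^ ((n₀ : ℝ) * (x : ℝ) / 2) := by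
      have hbpos : (0:ℝ) < (n₀:ℝ) * t / ((x:ℝ) + (n₀:ℝ) * t) := by positivity
      rw [Real.rpow_def_of_pos hbpos]
      congr 1
      have hlogb : Real.log ((n₀:ℝ) * t / ((x:ℝ) + (n₀:ℝ) * t))
          = - Real.log (1 + (x:ℝ)/((n₀:ℝ)*t)) := by
        rw [← Real.log_inv]
        congr 1
        rw [inv_eq_one_div, div_eq_div_iff (by positivity) (by positivity)]
        field_simp
        ring
      rw [hlogb]
      field_simp
    calc Real.sqrt s * Real.exp (-s) * besselI ((n:ℤ) * (x:ℤ)) s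
        ≤ Real.exp (s * Real.cosh u - s - kr * u) := step3
      _ ≤ Real.exp (-((x:ℝ)/(2*t)) * (((n₀:ℝ)*t) * Real.log (1 + (x:ℝ)/((n₀:ℝ)*t)))) := by
          apply Real.exp_le_exp.2
          linarith [step4, step5]
      _ = _ := step6
  · -- the rpow equality
    have hb2 : (0:ℝ) < 1 + (x:ℝ)/((n₀:ℝ)*t) := by positivity
    have hbeq : (n₀:ℝ) * t / ((x:ℝ) + (n₀:ℝ) * t) = (1 + (x:ℝ)/((n₀:ℝ)*t))⁻¹ := by
      rw [inv_eq_one_div]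
      rw [div_eq_div_iff (by positivity) (by positivity)]
      field_simp
      ring
    rw [hbeq, Real.inv_rpow hb2.le, ← Real.rpow_neg hb2.le, neg_div]
end
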